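/- Let P, Q be probability mass functions on a finite set A with full support and P ≠ Q. Let ζ = exp(D_∞(P‖Q)) with D_∞(P‖Q) = log(max_a P(a)/Q(a)). Then χ²(P‖Q) ≤ KL(P‖Q)/κ₂(ζ), where χ²(P‖Q) = Σ_a P(a)²/Q(a) − 1 and κ₂(t) = (t·log t + 1 − t)/(t − 1)². -/

import Mathlib

open Real

/-- `g t = (t - t⁻¹)/2 - log t` is monotone on `(0, ∞)`. -/
private lemma aux_g_mono : MonotoneOn (fun t : ℝ => (t - t⁻¹) / 2 - Real.log t) (Set.Ioi 0) := by
  have hderiv : ∀ x ∈ Set.Ioi (0:ℝ),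
      HasDerivAt (fun t : ℝ => (t - t⁻¹) / 2 - Real.log t) ((1 - (-(x ^ 2)⁻¹)) / 2 - x⁻¹) x := by
    intro x hx
    have hx0 : x ≠ 0 := ne_of_gt hx
    exact (((hasDerivAt_id x).sub (hasDerivAt_inv hx0)).div_const 2).sub
      (Real.hasDerivAt_log hx0)
  have hint : interior (Set.Ioi (0:ℝ)) = Set.Ioi 0 := interior_Ioi
  apply monotoneOn_of_deriv_nonneg (convex_Ioi 0)
  · exact fun x hx => ((hderiv x hx).continuousAt).continuousWithinAt
  · rw [hint]; exact fun x hx => (hderiv x hx).differentiableAt.differentiableWithinAt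
  · rw [hint]
    intro x hx
    rw [(hderiv x hx).deriv]
    have hx0 : (0:ℝ) < x := hx
    have h : (1 - (-(x ^ 2)⁻¹)) / 2 - x⁻¹ = (x - 1) ^ 2 / (2 * x ^ 2) := by
      field_simp
      ring
    rw [h]
    positivity

private lemma aux_log_le (t : ℝ) (ht : 1 ≤ t) : Real.log t ≤ (t - t⁻¹) / 2 := by
  have h := aux_g_mono (Set.mem_Ioi.2 one_pos) (Set.mem_Ioi.2 (lt_of_lt_of_le one_pos ht)) ht
  simp only [inv_one, Real.log_one] at h
  linarith

private lemma aux_log_ge (t : ℝ) (ht0 : 0 < t) (ht : t ≤ 1) : (t - t⁻¹) / 2 ≤ Real.log t := by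
  have hinv : 1 ≤ t⁻¹ := one_le_inv_iff₀.2 ⟨ht0, ht⟩
  have h := aux_log_le t⁻¹ hinv
  rw [Real.log_inv, inv_inv] at h
  linarith

/-- `h t = 2(t-1) - (t+1) log t` is nonpositive for `t ≥ 1`. -/
private lemma aux_h_nonpos (t : ℝ) (ht : 1 ≤ t) : 2 * (t - 1) - (t + 1) * Real.log t ≤ 0 := by
  have hderiv : ∀ x ∈ Set.Ici (1:ℝ),
      HasDerivAt (fun t : ℝ => 2 * (t - 1) - (t + 1) * Real.log t)
        (2 * 1 - (1 * Real.log x + (x + 1) * x⁻¹)) x := by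
    intro x hx
    have hx0 : x ≠ 0 := ne_of_gt (lt_of_lt_of_le one_pos hx)
    exact ((hasDerivAt_id x).sub_const 1).const_mul 2 |>.sub
      (((hasDerivAt_id x).add_const 1).mul (Real.hasDerivAt_log hx0))
  have hanti : AntitoneOn (fun t : ℝ => 2 * (t - 1) - (t + 1) * Real.log t) (Set.Ici 1) := by
    apply antitoneOn_of_deriv_nonpos (convex_Ici 1)
    · exact fun x hx => ((hderiv x hx).continuousAt).continuousWithinAt
    · rw [interior_Ici]
      exact fun x hx => (hderiv x (Set.Ioi_subset_Ici_self hx)).differentiableAt.differentiableWithinAt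
    · rw [interior_Ici]
      intro x hx
      rw [(hderiv x (Set.Ioi_subset_Ici_self hx)).deriv]
      have hx1 : (1:ℝ) < x := hx
      have hx0 : (0:ℝ) < x := lt_trans one_pos hx1
      have hlog : Real.log x⁻¹ ≤ x⁻¹ - 1 := Real.log_le_sub_one_of_pos (by positivity)
      rw [Real.log_inv] at hlog
      have hxx : (x + 1) * x⁻¹ = 1 + x⁻¹ := by field_simp
      rw [hxx]
      linarith
  have h1 := hanti (Set.mem_Ici.2 le_rfl) (Set.mem_Ici.2 ht) ht
  simp only [Real.log_one] at h1
  linarith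

/-- `κ₂(t) = (t log t + 1 - t)/(t-1)²` is antitone on `(1, ∞)`. -/
private lemma aux_kappa_anti :
    AntitoneOn (fun t : ℝ => (t * Real.log t + 1 - t) / (t - 1) ^ 2) (Set.Ioi 1) := by
  have hderiv : ∀ x ∈ Set.Ioi (1:ℝ),
      HasDerivAt (fun t : ℝ => (t * Real.log t + 1 - t) / (t - 1) ^ 2)
        (((1 * Real.log x + x * x⁻¹ - 1) * (x - 1) ^ 2 -
          (x * Real.log x + 1 - x) * (2 * (x - 1) ^ 1 * 1)) / ((x - 1) ^ 2) ^ 2) x := by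
    intro x hx
    have hx1 : (1:ℝ) < x := hx
    have hx0 : x ≠ 0 := ne_of_gt (lt_trans one_pos hx1)
    have hd : (x - 1) ^ 2 ≠ 0 := ne_of_gt (pow_pos (sub_pos.2 hx1) 2)
    exact HasDerivAt.div
      ((((hasDerivAt_id x).mul (Real.hasDerivAt_log hx0)).add_const 1).sub (hasDerivAt_id x))
      (((hasDerivAt_id x).sub_const 1).pow 2) hd
  apply antitoneOn_of_deriv_nonpos (convex_Ioi 1)
  · exact fun x hx => ((hderiv x hx).continuousAt).continuousWithinAt
  · rw [interior_Ioi]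
    exact fun x hx => (hderiv x hx).differentiableAt.differentiableWithinAt
  · rw [interior_Ioi]
    intro x hx
    rw [(hderiv x hx).deriv]
    have hx1 : (1:ℝ) < x := hx
    have hx0 : (0:ℝ) < x := lt_trans one_pos hx1
    apply div_nonpos_of_nonpos_of_nonneg _ (by positivity)
    have hxx : x * x⁻¹ = 1 := mul_inv_cancel₀ (ne_of_gt hx0)
    have hnum : (1 * Real.log x + x * x⁻¹ - 1) * (x - 1) ^ 2 -
        (x * Real.log x + 1 - x) * (2 * (x - 1) ^ 1 * 1) =
        (x - 1) * (2 * (x - 1) - (x + 1) * Real.log x) := by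
      rw [hxx]; ring
    rw [hnum]
    exact mul_nonpos_of_nonneg_of_nonpos (by linarith) (aux_h_nonpos x (le_of_lt hx1))

/-- Key pointwise inequality. -/
private lemma aux_key (ζ : ℝ) (hζ : 1 < ζ) (t : ℝ) (ht : 0 < t) (htζ : t ≤ ζ) :
    (ζ * Real.log ζ + 1 - ζ) / (ζ - 1) ^ 2 * (t - 1) ^ 2 ≤ t * Real.log t + 1 - t := by
  have hζ0 : (0:ℝ) < ζ := lt_trans one_pos hζ
  have hd : (0:ℝ) < (ζ - 1) ^ 2 := pow_pos (sub_pos.2 hζ) 2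
  rcases le_or_gt t 1 with h1 | h1
  · -- t ≤ 1 : use κ₂(ζ) ≤ 1/2 ≤ κ₂(t)
    have hup : ζ * Real.log ζ + 1 - ζ ≤ (ζ - 1) ^ 2 / 2 := by
      have := aux_log_le ζ (le_of_lt hζ)
      have h2 : ζ * Real.log ζ ≤ ζ * ((ζ - ζ⁻¹) / 2) :=
        mul_le_mul_of_nonneg_left this (le_of_lt hζ0)
      have h3 : ζ * ((ζ - ζ⁻¹) / 2) = (ζ ^ 2 - 1) / 2 := by field_simp
      nlinarith
    have hlow : (t - 1) ^ 2 / 2 ≤ t * Real.log t + 1 - t := by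
      have := aux_log_ge t ht h1
      have h2 : t * ((t - t⁻¹) / 2) ≤ t * Real.log t :=
        mul_le_mul_of_nonneg_left this (le_of_lt ht)
      have h3 : t * ((t - t⁻¹) / 2) = (t ^ 2 - 1) / 2 := by field_simp
      nlinarith
    have hc : (ζ * Real.log ζ + 1 - ζ) / (ζ - 1) ^ 2 ≤ 1 / 2 := by
      rw [div_le_div_iff₀ hd two_pos] at *
      linarith [hup]
    calc (ζ * Real.log ζ + 1 - ζ) / (ζ - 1) ^ 2 * (t - 1) ^ 2
        ≤ 1 / 2 * (t - 1) ^ 2 := mul_le_mul_of_nonneg_right hc (by positivity)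
      _ ≤ t * Real.log t + 1 - t := by linarith
  · -- 1 < t ≤ ζ : use antitonicity of κ₂ on (1, ∞)
    have := aux_kappa_anti (Set.mem_Ioi.2 h1) (Set.mem_Ioi.2 (lt_of_lt_of_le h1 htζ)) htζ
    have hdt : (0:ℝ) < (t - 1) ^ 2 := pow_pos (sub_pos.2 h1) 2
    rw [div_le_div_iff₀ hd hdt] at this
    rw [div_mul_eq_mul_div, div_le_iff₀ hd]
    linarith

theorem chisq_le_kl_div_kappa2
    {A : Type*} [Fintype A] [Nonempty A]
    (P Q : A → ℝ)
    (hP_pos : ∀ a, 0 < P a) (hQ_pos : ∀ a, 0 < Q a)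
    (hP_sum : ∑ a, P a = 1) (hQ_sum : ∑ a, Q a = 1)
    (hne : P ≠ Q)
    (ζ : ℝ) (hζ : ζ = Finset.univ.sup' Finset.univ_nonempty (fun a => P a / Q a)) :
    (∑ a, (P a) ^ 2 / Q a) - 1 ≤
      (∑ a, P a * Real.log (P a / Q a)) /
        ((ζ * Real.log ζ + 1 - ζ) / (ζ - 1) ^ 2) := by
  have hr_le : ∀ a, P a / Q a ≤ ζ := by
    intro a
    rw [hζ]
    exact Finset.le_sup' (fun a => P a / Q a) (Finset.mem_univ a)
  -- ζ > 1
  have hζ1 : 1 < ζ := by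
    by_contra h
    push_neg at h
    have hle : ∀ a, P a ≤ Q a := by
      intro a
      have := le_trans (hr_le a) h
      rwa [div_le_one (hQ_pos a)] at this
    apply hne
    funext a
    by_contra hPQ
    have hlt : P a < Q a := lt_of_le_of_ne (hle a) hPQ
    have : ∑ a, P a < ∑ a, Q a :=
      Finset.sum_lt_sum (fun i _ => hle i) ⟨a, Finset.mem_univ a, hlt⟩
    rw [hP_sum, hQ_sum] at this
    exact lt_irrefl 1 this
  have hζ0 : (0:ℝ) < ζ := lt_trans one_pos hζ1
  -- κ₂(ζ) > 0
  have hc_pos : 0 < (ζ * Real.log ζ + 1 - ζ) / (ζ - 1) ^ 2 := by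
    apply div_pos _ (pow_pos (sub_pos.2 hζ1) 2)
    have hlog : Real.log ζ⁻¹ < ζ⁻¹ - 1 :=
      Real.log_lt_sub_one_of_pos (by positivity) (by
        intro h
        rw [inv_eq_one] at h
        exact absurd h (ne_of_gt hζ1))
    rw [Real.log_inv] at hlog
    have : ζ * (ζ⁻¹ - 1) = 1 - ζ := by field_simp
    nlinarith [mul_lt_mul_of_pos_left hlog hζ0]
  rw [le_div_iff₀ hc_pos]
  -- pointwise inequality multiplied by Q a
  set c : ℝ := (ζ * Real.log ζ + 1 - ζ) / (ζ - 1) ^ 2 with hc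
  have hpt : ∀ a : A, c * (P a ^ 2 / Q a - 2 * P a + Q a) ≤
      P a * Real.log (P a / Q a) + Q a - P a := by
    intro a
    have hQ := hQ_pos a
    have hP := hP_pos a
    have hr : 0 < P a / Q a := div_pos hP hQ
    have key := aux_key ζ hζ1 (P a / Q a) hr (hr_le a)
    have h1 : Q a * (c * (P a / Q a - 1) ^ 2) ≤
        Q a * (P a / Q a * Real.log (P a / Q a) + 1 - P a / Q a) :=
      mul_le_mul_of_nonneg_left key (le_of_lt hQ)
    have h2 : Q a * (c * (P a / Q a - 1) ^ 2) = c * (P a ^ 2 / Q a - 2 * P a + Q a) := by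
      field_simp
      ring
    have h3 : Q a * (P a / Q a * Real.log (P a / Q a) + 1 - P a / Q a) =
        P a * Real.log (P a / Q a) + Q a - P a := by
      field_simp
    rw [h2, h3] at h1
    exact h1
  have hL : ∑ a, (P a ^ 2 / Q a - 2 * P a + Q a) = (∑ a, P a ^ 2 / Q a) - 1 := by
    rw [Finset.sum_add_distrib, Finset.sum_sub_distrib, ← Finset.mul_sum, hP_sum, hQ_sum]
    ring
  have hR : ∑ a, (P a * Real.log (P a / Q a) + Q a - P a) =
      ∑ a, P a * Real.log (P a / Q a) := by
    rw [Finset.sum_sub_distrib, Finset.sum_add_distrib, hP_sum, hQ_sum]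
    ring
  calc ((∑ a, P a ^ 2 / Q a) - 1) * c
      = c * ∑ a, (P a ^ 2 / Q a - 2 * P a + Q a) := by rw [hL]; ring
    _ ≤ ∑ a, (P a * Real.log (P a / Q a) + Q a - P a) := by
        rw [Finset.mul_sum]
        exact Finset.sum_le_sum (fun a _ => hpt a)
    _ = ∑ a, P a * Real.log (P a / Q a) := hR
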